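/- There exists ε₀ > 0 such that for every ε with 0 < ε ≤ ε₀ and every finite (ε/4)-net X of the circle S¹, the chromatic number of the ε-distance graph D_{X,ε}(2π/3) equals 4. -/

import Mathlib

/-- The circle `S¹ = ℝ/2πℤ` with its quotient metric. -/
abbrev Circle2 : Type := AddCircle (2 * Real.pi)

instance : Fact (0 < 2 * Real.pi) := ⟨by positivity⟩

/-- `X` is an `r`-net of the circle. -/
def cIsNet (r : ℝ) (X : Set Circle2) : Prop :=
  ∀ y : Circle2, ∃ x ∈ X, dist x y ≤ r

/-- The ε-distance graph with parameter α on a set `X ⊆ S¹`: distinct points are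
adjacent iff their distance lies in `[α - ε, α + ε]`. -/
def cDistGraph (X : Set Circle2) (α ε : ℝ) : SimpleGraph X where
  Adj x y := x ≠ y ∧ α - ε ≤ dist x.1 y.1 ∧ dist x.1 y.1 ≤ α + ε
  symm := by
    constructor
    intro x y h
    exact ⟨h.1.symm, by rw [dist_comm]; exact h.2.1, by rw [dist_comm]; exact h.2.2⟩
  loopless := ⟨fun x h => h.1 rfl⟩

/-- The ε-distance graph with parameter α on the whole circle `S¹`. -/
def cDistGraphAll (α ε : ℝ) : SimpleGraph Circle2 where
  Adj x y := x ≠ y ∧ α - ε ≤ dist x y ∧ dist x y ≤ α + ε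
  symm := by
    constructor
    intro x y h
    exact ⟨h.1.symm, by rw [dist_comm]; exact h.2.1, by rw [dist_comm]; exact h.2.2⟩
  loopless := ⟨fun x h => h.1 rfl⟩

/- ################ auxiliary lemmas ################ -/

open Real

lemma fin3_force (a b z w : Fin 3) (h1 : a ≠ z) (h2 : a ≠ w) (h3 : z ≠ w)
    (h4 : b ≠ z) (h5 : b ≠ w) : a = b := by
  revert h1 h2 h3 h4 h5; revert a b z w; decide

lemma circle2_dist_coe (u v : ℝ) :
    dist (↑u : Circle2) ↑v = ‖((u - v : ℝ) : Circle2)‖ := by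
  rw [dist_eq_norm]
  norm_cast

lemma circle2_norm_coe_le (u : ℝ) : ‖((u : ℝ) : Circle2)‖ ≤ |u| := by
  simpa using QuotientAddGroup.norm_mk_le_norm (S := AddSubgroup.zmultiples (2 * Real.pi)) (m := u)

lemma circle2_dist_coe_le (u v : ℝ) : dist (↑u : Circle2) ↑v ≤ |u - v| := by
  rw [circle2_dist_coe]; exact circle2_norm_coe_le _

lemma circle2_norm_third : ‖((2 * Real.pi / 3 : ℝ) : Circle2)‖ = 2 * Real.pi / 3 := by
  have hpi := Real.pi_pos
  have h : |(2 * Real.pi / 3 : ℝ)| ≤ |2 * Real.pi| / 2 := by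
    rw [abs_of_pos (by positivity), abs_of_pos (by positivity)]
    nlinarith
  rw [(AddCircle.norm_coe_eq_abs_iff (2 * Real.pi) (by positivity)).2 h,
    abs_of_pos (by positivity)]

lemma circle2_norm_neg_third : ‖((-(2 * Real.pi / 3) : ℝ) : Circle2)‖ = 2 * Real.pi / 3 := by
  rw [AddCircle.coe_neg, norm_neg]
  exact circle2_norm_third

lemma circle2_exists_rep (x : Circle2) :
    ∃ r : ℝ, 0 ≤ r ∧ r < 2 * Real.pi ∧ (↑r : Circle2) = x := by
  refine ⟨(AddCircle.equivIco (2 * Real.pi) 0 x : ℝ), ?_, ?_, ?_⟩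
  · have := (AddCircle.equivIco (2 * Real.pi) 0 x).2.1
    simpa using this
  · have := (AddCircle.equivIco (2 * Real.pi) 0 x).2.2
    simpa using this
  · exact (AddCircle.equivIco (2 * Real.pi) 0).symm_apply_apply x

set_option maxHeartbeats 1000000 in
/-- Key forcing lemma: with a proper 3-coloring, nearby points get the same color. -/
lemma force_same_color {ε : ℝ} (hε : 0 < ε) (hε₀ : ε ≤ Real.pi / 12)
    {X : Set Circle2} (hnet : cIsNet (ε / 4) X)
    (C : (cDistGraph X (2 * Real.pi / 3) ε).Coloring (Fin 3))
    (a b : X) (hab : dist a.1 b.1 ≤ 3 * ε / 4) : C a = C b := by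
  have hpi := Real.pi_pos
  obtain ⟨z, hzX, hz⟩ := hnet (a.1 + ((2 * Real.pi / 3 : ℝ) : Circle2))
  obtain ⟨w, hwX, hw⟩ := hnet (a.1 + ((-(2 * Real.pi / 3) : ℝ) : Circle2))
  have hz' : dist (a.1 + ((2 * Real.pi / 3 : ℝ) : Circle2)) z ≤ ε / 4 := by rw [dist_comm]; exact hz
  have hw' : dist (a.1 + ((-(2 * Real.pi / 3) : ℝ) : Circle2)) w ≤ ε / 4 := by rw [dist_comm]; exact hw
  -- exact distances of the reference points
  have dz : dist a.1 (a.1 + ((2 * Real.pi / 3 : ℝ) : Circle2)) = 2 * Real.pi / 3 := by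
    rw [dist_eq_norm]
    simpa using circle2_norm_third
  have dw : dist a.1 (a.1 + ((-(2 * Real.pi / 3) : ℝ) : Circle2)) = 2 * Real.pi / 3 := by
    rw [dist_eq_norm]
    simpa using circle2_norm_neg_third
  have key : ((2 * Real.pi / 3 : ℝ) : Circle2) - ((-(2 * Real.pi / 3) : ℝ) : Circle2) = ((-(2 * Real.pi / 3) : ℝ) : Circle2) := by
    rw [← sub_eq_zero, ← AddCircle.coe_sub, ← AddCircle.coe_sub]
    have h2pi : 2 * Real.pi / 3 - -(2 * Real.pi / 3) - -(2 * Real.pi / 3) = 2 * Real.pi := by ring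
    rw [h2pi]
    exact AddCircle.coe_period _
  have dzw : dist (a.1 + ((2 * Real.pi / 3 : ℝ) : Circle2)) (a.1 + ((-(2 * Real.pi / 3) : ℝ) : Circle2)) = 2 * Real.pi / 3 := by
    rw [dist_eq_norm, add_sub_add_left_eq_sub, key]
    simpa using circle2_norm_neg_third
  -- distance bounds for the selected net points
  have haz : |dist a.1 z - 2 * Real.pi / 3| ≤ ε / 4 := by
    have h1 := dist_triangle a.1 (a.1 + ((2 * Real.pi / 3 : ℝ) : Circle2)) z
    have h2 := dist_triangle a.1 z (a.1 + ((2 * Real.pi / 3 : ℝ) : Circle2))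
    rw [dz] at h1 h2
    rw [abs_le]
    constructor <;> linarith
  have haw : |dist a.1 w - 2 * Real.pi / 3| ≤ ε / 4 := by
    have h1 := dist_triangle a.1 (a.1 + ((-(2 * Real.pi / 3) : ℝ) : Circle2)) w
    have h2 := dist_triangle a.1 w (a.1 + ((-(2 * Real.pi / 3) : ℝ) : Circle2))
    rw [dw] at h1 h2
    rw [abs_le]
    constructor <;> linarith
  have hzw : |dist z w - 2 * Real.pi / 3| ≤ ε / 2 := by
    have h1 := dist_triangle4 z (a.1 + ((2 * Real.pi / 3 : ℝ) : Circle2)) (a.1 + ((-(2 * Real.pi / 3) : ℝ) : Circle2)) w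
    have h2 := dist_triangle4 (a.1 + ((2 * Real.pi / 3 : ℝ) : Circle2)) z w (a.1 + ((-(2 * Real.pi / 3) : ℝ) : Circle2))
    rw [dist_comm z (a.1 + ((2 * Real.pi / 3 : ℝ) : Circle2))] at h1
    rw [dist_comm w (a.1 + ((-(2 * Real.pi / 3) : ℝ) : Circle2))] at h2
    rw [dzw] at h1 h2
    rw [abs_le]
    constructor <;> linarith
  have hbz : |dist b.1 z - 2 * Real.pi / 3| ≤ ε := by
    have h1 : dist b.1 z ≤ dist b.1 a.1 + dist a.1 z := dist_triangle _ _ _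
    have h2 : dist a.1 z ≤ dist a.1 b.1 + dist b.1 z := dist_triangle _ _ _
    rw [dist_comm b.1 a.1] at h1
    rw [abs_le] at haz ⊢
    constructor <;> nlinarith
  have hbw : |dist b.1 w - 2 * Real.pi / 3| ≤ ε := by
    have h1 : dist b.1 w ≤ dist b.1 a.1 + dist a.1 w := dist_triangle _ _ _
    have h2 : dist a.1 w ≤ dist a.1 b.1 + dist b.1 w := dist_triangle _ _ _
    rw [dist_comm b.1 a.1] at h1
    rw [abs_le] at haw ⊢
    constructor <;> nlinarith
  -- positivity of all these distances (hence the points are distinct)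
  have hαε : 0 < 2 * Real.pi / 3 - ε := by nlinarith
  have adj : ∀ (u v : X), |dist u.1 v.1 - 2 * Real.pi / 3| ≤ ε →
      (cDistGraph X (2 * Real.pi / 3) ε).Adj u v := by
    intro u v huv
    rw [abs_le] at huv
    have hne : u ≠ v := by
      intro h
      rw [h, dist_self] at huv
      linarith [huv.1]
    show u ≠ v ∧ 2 * Real.pi / 3 - ε ≤ dist u.1 v.1 ∧ dist u.1 v.1 ≤ 2 * Real.pi / 3 + ε
    exact ⟨hne, by linarith [huv.1], by linarith [huv.2]⟩
  have e_az := adj a ⟨z, hzX⟩ (haz.trans (by linarith))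
  have e_aw := adj a ⟨w, hwX⟩ (haw.trans (by linarith))
  have hhalf : ε / 2 ≤ ε := by linarith
  have e_zw := adj ⟨z, hzX⟩ ⟨w, hwX⟩ (hzw.trans hhalf)
  have e_bz := adj b ⟨z, hzX⟩ hbz
  have e_bw := adj b ⟨w, hwX⟩ hbw
  exact fin3_force (C a) (C b) (C ⟨z, hzX⟩) (C ⟨w, hwX⟩)
    (C.valid e_az) (C.valid e_aw) (C.valid e_zw) (C.valid e_bz) (C.valid e_bw)

set_option maxHeartbeats 1000000 in
/-- the ε-distance graph with parameter `2π/3` on any finite `(ε/4)`-net of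
`S¹` has chromatic number exactly `4` for all small `ε > 0`. -/
theorem stmt_13 :
    ∃ ε₀ > (0 : ℝ), ∀ ε : ℝ, 0 < ε → ε ≤ ε₀ →
      ∀ X : Set Circle2, X.Finite → cIsNet (ε / 4) X →
        (cDistGraph X (2 * Real.pi / 3) ε).chromaticNumber = 4 := by
  have hpi := Real.pi_pos
  refine ⟨Real.pi / 12, by positivity, ?_⟩
  intro ε hε hε₀ X _hXfin hnet
  -- Upper bound: a 4-coloring by quarters.
  have hcol4 : (cDistGraph X (2 * Real.pi / 3) ε).Colorable 4 := by
    classical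
    refine ⟨SimpleGraph.Coloring.mk
      (fun x => ⟨(⌊(AddCircle.equivIco (2 * Real.pi) 0 x.1 : ℝ) / (Real.pi / 2)⌋).toNat % 4,
        Nat.mod_lt _ (by norm_num)⟩) ?_⟩
    intro x y hxy hcxy
    set rx := (AddCircle.equivIco (2 * Real.pi) 0 x.1 : ℝ) with hrx
    set ry := (AddCircle.equivIco (2 * Real.pi) 0 y.1 : ℝ) with hry
    have hx0 : 0 ≤ rx := by have := (AddCircle.equivIco (2 * Real.pi) 0 x.1).2.1; simpa using this
    have hx2 : rx < 2 * Real.pi := by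
      have := (AddCircle.equivIco (2 * Real.pi) 0 x.1).2.2; simpa using this
    have hy0 : 0 ≤ ry := by have := (AddCircle.equivIco (2 * Real.pi) 0 y.1).2.1; simpa using this
    have hy2 : ry < 2 * Real.pi := by
      have := (AddCircle.equivIco (2 * Real.pi) 0 y.1).2.2; simpa using this
    have hqx0 : (0 : ℤ) ≤ ⌊rx / (Real.pi / 2)⌋ := Int.floor_nonneg.2 (by positivity)
    have hqy0 : (0 : ℤ) ≤ ⌊ry / (Real.pi / 2)⌋ := Int.floor_nonneg.2 (by positivity)
    have hqx4 : ⌊rx / (Real.pi / 2)⌋ < 4 := by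
      rw [Int.floor_lt]
      push_cast
      rw [div_lt_iff₀ (by positivity)]
      nlinarith
    have hqy4 : ⌊ry / (Real.pi / 2)⌋ < 4 := by
      rw [Int.floor_lt]
      push_cast
      rw [div_lt_iff₀ (by positivity)]
      nlinarith
    have heq : ⌊rx / (Real.pi / 2)⌋ = ⌊ry / (Real.pi / 2)⌋ := by
      have hv : (⌊rx / (Real.pi / 2)⌋.toNat % 4) = (⌊ry / (Real.pi / 2)⌋.toNat % 4) :=
        congrArg Fin.val hcxy
      omega
    -- same floor means the reps are within π/2
    have habs : |rx - ry| < Real.pi / 2 := by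
      have h1 := Int.floor_le (rx / (Real.pi / 2))
      have h2 := Int.lt_floor_add_one (rx / (Real.pi / 2))
      have h3 := Int.floor_le (ry / (Real.pi / 2))
      have h4 := Int.lt_floor_add_one (ry / (Real.pi / 2))
      rw [heq] at h1 h2
      rw [abs_lt]
      have hq : |rx / (Real.pi / 2) - ry / (Real.pi / 2)| < 1 := by
        rw [abs_lt]; constructor <;> linarith
      rw [abs_lt] at hq
      have e1 : rx / (Real.pi / 2) - ry / (Real.pi / 2) = (rx - ry) / (Real.pi / 2) := by ring
      rw [e1, div_lt_iff₀ (by positivity), lt_div_iff₀ (by positivity)] at hq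
      constructor <;> nlinarith [hq.1, hq.2]
    -- contradiction with adjacency lower bound
    change x ≠ y ∧ 2 * Real.pi / 3 - ε ≤ dist x.1 y.1 ∧ dist x.1 y.1 ≤ 2 * Real.pi / 3 + ε at hxy
    obtain ⟨-, hlow, -⟩ := hxy
    have hxx : ((rx : ℝ) : Circle2) = x.1 :=
      (AddCircle.equivIco (2 * Real.pi) 0).symm_apply_apply x.1
    have hyy : ((ry : ℝ) : Circle2) = y.1 :=
      (AddCircle.equivIco (2 * Real.pi) 0).symm_apply_apply y.1
    have hd : dist x.1 y.1 ≤ |rx - ry| := by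
      rw [← hxx, ← hyy]; exact circle2_dist_coe_le _ _
    nlinarith
  -- Lower bound: not 3-colorable.
  have hnot3 : ¬ (cDistGraph X (2 * Real.pi / 3) ε).Colorable 3 := by
    rintro ⟨C⟩
    -- a number of steps and a step size
    have hNpos0 : 0 < (⌈8 * Real.pi / (3 * ε)⌉₊ : ℕ) := Nat.ceil_pos.2 (by positivity)
    obtain ⟨N, t, hNpos, htpos, hNt, htε⟩ :
        ∃ (N : ℕ) (t : ℝ), 0 < N ∧ 0 < t ∧ (N : ℝ) * t = 2 * Real.pi / 3 ∧ t ≤ ε / 4 := by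
      have hNc : (0 : ℝ) < (⌈8 * Real.pi / (3 * ε)⌉₊ : ℕ) := by exact_mod_cast hNpos0
      refine ⟨⌈8 * Real.pi / (3 * ε)⌉₊,
        (2 * Real.pi / 3) / ((⌈8 * Real.pi / (3 * ε)⌉₊ : ℕ) : ℝ), hNpos0, by positivity, ?_, ?_⟩
      · field_simp
      · have hle : 8 * Real.pi / (3 * ε) ≤ ((⌈8 * Real.pi / (3 * ε)⌉₊ : ℕ) : ℝ) := Nat.le_ceil _
        rw [div_le_div_iff₀ hNc (by positivity)]
        rw [div_le_iff₀ (by positivity)] at hle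
        nlinarith
    -- pick net points near each step point
    have hsel : ∀ j : ℕ, ∃ x ∈ X, dist x (((j : ℝ) * t : ℝ) : Circle2) ≤ ε / 4 :=
      fun j => hnet _
    choose g hgX hgd using hsel
    -- the color is constant along the chain
    have hchain : ∀ j : ℕ, C ⟨g j, hgX j⟩ = C ⟨g 0, hgX 0⟩ := by
      intro j
      induction j with
      | zero => rfl
      | succ k ih =>
        have hstep : dist (g (k + 1)) (g k) ≤ 3 * ε / 4 := by
          have h1 := hgd (k + 1)
          have h2 := hgd k
          have h3 : dist ((((k : ℝ) + 1) * t : ℝ) : Circle2) (((k : ℝ) * t : ℝ) : Circle2)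
              ≤ t := by
            have := circle2_dist_coe_le (((k : ℝ) + 1) * t) ((k : ℝ) * t)
            have he : ((k : ℝ) + 1) * t - (k : ℝ) * t = t := by ring
            rw [he, abs_of_pos htpos] at this
            exact this
          have h4 := dist_triangle4 (g (k + 1)) ((((k : ℝ) + 1) * t : ℝ) : Circle2)
            (((k : ℝ) * t : ℝ) : Circle2) (g k)
          rw [dist_comm (((k : ℝ) * t : ℝ) : Circle2) (g k)] at h4
          push_cast at h1
          linarith
        have := force_same_color hε hε₀ hnet C ⟨g (k + 1), hgX (k + 1)⟩ ⟨g k, hgX k⟩ hstep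
        rw [this, ih]
    -- but g N and g 0 are adjacent
    have hdN : |dist (g N) (g 0) - 2 * Real.pi / 3| ≤ ε / 2 := by
      have h1 := hgd N
      have h2 := hgd 0
      have e0 : ((0 : ℕ) : ℝ) * t = 0 := by norm_num
      have hdist : dist ((((N : ℕ) : ℝ) * t : ℝ) : Circle2) ((((0 : ℕ) : ℝ) * t : ℝ) : Circle2)
          = 2 * Real.pi / 3 := by
        rw [e0, hNt, circle2_dist_coe, sub_zero, circle2_norm_third]
      have h3 := dist_triangle4 (g N) ((((N : ℕ) : ℝ) * t : ℝ) : Circle2)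
        ((((0 : ℕ) : ℝ) * t : ℝ) : Circle2) (g 0)
      have h4 := dist_triangle4 ((((N : ℕ) : ℝ) * t : ℝ) : Circle2) (g N) (g 0)
        ((((0 : ℕ) : ℝ) * t : ℝ) : Circle2)
      rw [dist_comm ((((0 : ℕ) : ℝ) * t : ℝ) : Circle2) (g 0)] at h3
      rw [dist_comm ((((N : ℕ) : ℝ) * t : ℝ) : Circle2) (g N)] at h4
      rw [hdist] at h3 h4
      rw [abs_le]
      constructor <;> linarith
    have hadj : (cDistGraph X (2 * Real.pi / 3) ε).Adj ⟨g N, hgX N⟩ ⟨g 0, hgX 0⟩ := by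
      rw [abs_le] at hdN
      have hαε : 0 < 2 * Real.pi / 3 - ε := by nlinarith
      have hne : (⟨g N, hgX N⟩ : X) ≠ ⟨g 0, hgX 0⟩ := by
        intro h
        have hgg : g N = g 0 := congrArg Subtype.val h
        rw [hgg, dist_self] at hdN
        linarith [hdN.1]
      show (⟨g N, hgX N⟩ : X) ≠ ⟨g 0, hgX 0⟩ ∧ 2 * Real.pi / 3 - ε ≤ dist (g N) (g 0) ∧ dist (g N) (g 0) ≤ 2 * Real.pi / 3 + ε
      exact ⟨hne, by linarith [hdN.1], by linarith [hdN.2]⟩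
    exact C.valid hadj (hchain N)
  -- combine
  have h4 : (cDistGraph X (2 * Real.pi / 3) ε).chromaticNumber ≤ 4 := by
    have := hcol4.chromaticNumber_le
    simpa using this
  have h3' : ¬ (cDistGraph X (2 * Real.pi / 3) ε).chromaticNumber ≤ 3 := by
    rw [show ((3 : ℕ∞)) = ((3 : ℕ) : ℕ∞) by norm_cast,
      SimpleGraph.chromaticNumber_le_iff_colorable]
    exact hnot3
  have hgt : (3 : ℕ∞) < (cDistGraph X (2 * Real.pi / 3) ε).chromaticNumber := lt_of_not_ge h3'
  have hge : (4 : ℕ∞) ≤ (cDistGraph X (2 * Real.pi / 3) ε).chromaticNumber := by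
    have := Order.add_one_le_of_lt hgt
    rw [show (4 : ℕ∞) = 3 + 1 by norm_num]
    exact this
  exact le_antisymm h4 hge
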